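/- Under the recursion ε₂ = 3ε + ε² and ε_{K+1} = 2ε + ε_K + ε_K·ε for K ≥ 2, with 0 < ε and Kε < 1, one has ε_K ≤ f(K) := 2Σ_{i=1}^K (Kε)^i for all K ≥ 2. -/

import Mathlib

/-- The error recursion `ε₂ = 3ε + ε²`, `ε_{K+1} = 2ε + ε_K + ε_K ε` satisfies
`ε_K ≤ 2 ∑_{i=1}^K (Kε)^i` whenever `Kε < 1`. -/
theorem stmt5 (ε : ℝ) (hε : 0 < ε) (e : ℕ → ℝ)
    (h2 : e 2 = 3 * ε + ε ^ 2)
    (hstep : ∀ K, 2 ≤ K → e (K + 1) = 2 * ε + e K + e K * ε) :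
    ∀ K : ℕ, 2 ≤ K → (K:ℝ) * ε < 1 →
      e K ≤ 2 * ∑ i ∈ Finset.Icc 1 K, ((K:ℝ) * ε) ^ i := by
  have key : ∀ K : ℕ, 2 ≤ K → e K ≤ 2 * ((1 + ε) ^ K - 1) := by
    intro K hK
    induction K, hK using Nat.le_induction with
    | base => rw [h2]; nlinarith
    | succ K hK ih =>
      rw [hstep K hK]
      have h1 : (0:ℝ) < 1 + ε := by linarith
      have : e K + e K * ε = e K * (1 + ε) := by ring
      have hb : e K * (1 + ε) ≤ 2 * ((1 + ε) ^ K - 1) * (1 + ε) :=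
        mul_le_mul_of_nonneg_right ih (le_of_lt h1)
      calc 2 * ε + e K + e K * ε ≤ 2 * ε + 2 * ((1 + ε) ^ K - 1) * (1 + ε) := by linarith
        _ = 2 * ((1 + ε) ^ (K + 1) - 1) := by ring
  intro K hK _
  refine (key K hK).trans ?_
  have h2K : (1 + ε) ^ K - 1 ≤ ∑ i ∈ Finset.Icc 1 K, ((K:ℝ) * ε) ^ i := by
    have hbin : (1 + ε) ^ K = ∑ i ∈ Finset.range (K + 1), (K.choose i : ℝ) * ε ^ i := by
      rw [add_comm, add_pow]
      refine Finset.sum_congr rfl fun i _ => by ring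
    have hsplit : ∑ i ∈ Finset.range (K + 1), (K.choose i : ℝ) * ε ^ i
        = 1 + ∑ i ∈ Finset.Icc 1 K, (K.choose i : ℝ) * ε ^ i := by
      rw [Finset.range_eq_Ico, Finset.sum_eq_sum_Ico_succ_bot (by omega : 0 < K + 1),
        ← Finset.Ico_add_one_right_eq_Icc]
      simp
    have hle : ∑ i ∈ Finset.Icc 1 K, (K.choose i : ℝ) * ε ^ i
        ≤ ∑ i ∈ Finset.Icc 1 K, ((K:ℝ) * ε) ^ i := by
      refine Finset.sum_le_sum fun i _ => ?_
      rw [mul_pow]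
      refine mul_le_mul_of_nonneg_right ?_ (by positivity)
      rw [← Nat.cast_pow]
      exact_mod_cast Nat.choose_le_pow K i
    rw [hbin, hsplit]
    linarith
  linarith
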